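/- Let R be a Z[q]/(q^{n+1})-algebra with n ≥ 1 and suppose q^{2n} = 0 and every u ∈ A(R)^* of the form u = 1 + qⁿa (a ∈ A(R)) can be written as u = u₁ · α_{u₁}(u₂) where u₁ ∈ 1 + t₁R[[t₁]], u₂ ∈ 1 + qⁿR[[t₂]], and α_{u₁} is the automorphism of A(R) with α_{u₁}(t₁) = t₁u₁, α_{u₁}(t₂) = t₂u₁^{-1}. Specifically, writing a = a₁ + a₂ with a₁ ∈ t₁R[[t₁]] and a₂ ∈ R[[t₂]], one can take u₁ = 1 + qⁿa₁ and u₂ = 1 + qⁿa₂, and then u₁ · α_{u₁}(u₂) = 1 + qⁿ(a₁ + a₂) = u. -/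

import Mathlib

set_option maxHeartbeats 2000000

/-- `A(R) = R[[t₁,t₂]]/(t₁t₂ - q)`. -/
noncomputable abbrev NodeAlg (R : Type*) [CommRing R] (q : R) :=
  MvPowerSeries (Fin 2) R ⧸
    Ideal.span {MvPowerSeries.X (0 : Fin 2) * MvPowerSeries.X 1 - MvPowerSeries.C (σ := Fin 2) (R := R) q}

/-- The projection `R[[t₁,t₂]] → A(R)`. -/
noncomputable abbrev nodeMk (R : Type*) [CommRing R] (q : R) :
    MvPowerSeries (Fin 2) R →+* NodeAlg R q :=
  Ideal.Quotient.mk _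

section GlueAux

open MvPowerSeries Finsupp Finset

variable {R : Type*} [CommRing R]

/-- The diagonal exponent `(k, k)` as a finitely supported function on `Fin 2`. -/
noncomputable def ddiag (k : ℕ) : Fin 2 →₀ ℕ := Finsupp.single 0 k + Finsupp.single 1 k

lemma ddiag_zero : ddiag 0 = 0 := by simp [ddiag]

lemma ddiag_sub (m : Fin 2 →₀ ℕ) (k : ℕ) : m + ddiag (k+1) - ddiag 1 = m + ddiag k := by
  ext a
  fin_cases a <;> simp [ddiag, Finsupp.single_apply, Finsupp.tsub_apply]

lemma ddiag_le (m : Fin 2 →₀ ℕ) (k : ℕ) : ddiag 1 ≤ m + ddiag (k+1) := by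
  rw [Finsupp.le_def]
  intro a; fin_cases a <;> simp [ddiag, Finsupp.single_apply] <;> omega

lemma ddiag_not_le (m : Fin 2 →₀ ℕ) (h : m 0 = 0 ∨ m 1 = 0) : ¬ ddiag 1 ≤ m := by
  rw [Finsupp.le_def]
  intro hc
  rcases h with h | h
  · have := hc 0; simp [ddiag, Finsupp.single_apply, h] at this
  · have := hc 1; simp [ddiag, Finsupp.single_apply, h] at this

lemma ddiag_le_of_ne (m : Fin 2 →₀ ℕ) (h0 : m 0 ≠ 0) (h1 : m 1 ≠ 0) : ddiag 1 ≤ m := by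
  rw [Finsupp.le_def]
  intro a; fin_cases a <;> simp [ddiag, Finsupp.single_apply] <;> omega

lemma ddiag_sub_add (m : Fin 2 →₀ ℕ) (k : ℕ) (h : ddiag 1 ≤ m) :
    m - ddiag 1 + ddiag (k+1) = m + ddiag k := by
  have h0 := Finsupp.le_def.mp h 0
  have h1 := Finsupp.le_def.mp h 1
  simp [ddiag, Finsupp.single_apply] at h0 h1
  ext a
  fin_cases a <;> simp [ddiag, Finsupp.single_apply, Finsupp.tsub_apply] <;> omega

lemma X0X1_eq : (MvPowerSeries.X 0 * MvPowerSeries.X 1 : MvPowerSeries (Fin 2) R)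
    = MvPowerSeries.monomial (R := R) (ddiag 1) 1 := by
  rw [MvPowerSeries.X_def, MvPowerSeries.X_def, MvPowerSeries.monomial_mul_monomial, one_mul, ddiag]

/-- The twisted diagonal functional `z ↦ ∑ₖ qᵏ · z_{m + (k,k)}`; it kills the ideal
`(t₁t₂ - q)` at boundary indices. -/
noncomputable def Dfun (q : R) (n : ℕ) (m : Fin 2 →₀ ℕ) (z : MvPowerSeries (Fin 2) R) : R :=
  ∑ k ∈ Finset.range (n+1), q ^ k * MvPowerSeries.coeff (R := R) (m + ddiag k) z

lemma Dfun_add (q : R) (n : ℕ) (m : Fin 2 →₀ ℕ) (z w : MvPowerSeries (Fin 2) R) :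
    Dfun q n m (z + w) = Dfun q n m z + Dfun q n m w := by
  simp [Dfun, mul_add, Finset.sum_add_distrib]

lemma Dfun_P0_mul (q : R) (n : ℕ) (hq : q ^ (n+1) = 0) (m : Fin 2 →₀ ℕ)
    (hm : m 0 = 0 ∨ m 1 = 0) (d : MvPowerSeries (Fin 2) R) :
    Dfun q n m ((MvPowerSeries.X 0 * MvPowerSeries.X 1 - MvPowerSeries.C (σ := Fin 2) (R := R) q) * d) = 0 := by
  have hco : ∀ k : ℕ, MvPowerSeries.coeff (R := R) (m + ddiag k)
      ((MvPowerSeries.X 0 * MvPowerSeries.X 1 - MvPowerSeries.C (σ := Fin 2) (R := R) q) * d)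
      = (if k = 0 then 0 else MvPowerSeries.coeff (R := R) (m + ddiag (k-1)) d)
        - q * MvPowerSeries.coeff (R := R) (m + ddiag k) d := by
    intro k
    rw [sub_mul, map_sub, X0X1_eq, MvPowerSeries.coeff_monomial_mul, MvPowerSeries.coeff_C_mul]
    cases k with
    | zero =>
      rw [if_neg, if_pos rfl]
      rw [ddiag_zero, add_zero]
      exact ddiag_not_le m hm
    | succ k =>
      rw [if_pos (ddiag_le m k), if_neg (Nat.succ_ne_zero k), one_mul, ddiag_sub]
      simp
  unfold Dfun
  simp only [hco, mul_sub]
  rw [Finset.sum_sub_distrib]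
  rw [Finset.sum_range_succ' (fun k => q ^ k * (if k = 0 then 0 else MvPowerSeries.coeff (R := R) (m + ddiag (k-1)) d)) n]
  rw [Finset.sum_range_succ (fun k => q ^ k * (q * MvPowerSeries.coeff (R := R) (m + ddiag k) d)) n]
  simp only [if_neg (Nat.succ_ne_zero _), if_pos rfl, mul_zero, add_zero, Nat.add_sub_cancel]
  have : ∀ k, q ^ (k+1) * MvPowerSeries.coeff (R := R) (m + ddiag k) d
      = q ^ k * (q * MvPowerSeries.coeff (R := R) (m + ddiag k) d) := by intro k; ring
  simp only [this]
  have h2 : q ^ n * (q * MvPowerSeries.coeff (R := R) (m + ddiag n) d) = 0 := by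
    rw [show q ^ n * (q * MvPowerSeries.coeff (R := R) (m + ddiag n) d) = q^(n+1) * MvPowerSeries.coeff (R := R) (m + ddiag n) d by ring, hq, zero_mul]
  rw [h2]
  simp

lemma Dfun_trunc (q : R) (n : ℕ) (hq : q ^ (n+1) = 0) (m : Fin 2 →₀ ℕ) (N : ℕ)
    (hmN : m 1 < N) (c : MvPowerSeries (Fin 2) R) :
    Dfun q n m (MvPowerSeries.C (σ := Fin 2) (R := R) (q^n) * (MvPowerSeries.X 1 ^ N * c)) = 0 := by
  apply Finset.sum_eq_zero
  intro k _
  rw [MvPowerSeries.coeff_C_mul]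
  cases k with
  | zero =>
    rw [MvPowerSeries.X_pow_eq, MvPowerSeries.coeff_monomial_mul, if_neg]
    · simp
    · rw [Finsupp.single_le_iff]
      simp [ddiag, Finsupp.single_apply]
      omega
  | succ k =>
    have : q ^ (k+1) * (q ^ n * MvPowerSeries.coeff (R := R) (m + ddiag (k+1)) (MvPowerSeries.X 1 ^ N * c))
        = q ^ k * q^(n+1) * MvPowerSeries.coeff (R := R) (m + ddiag (k+1)) (MvPowerSeries.X 1 ^ N * c) := by ring
    rw [this, hq]
    simp

lemma Recon (q : R) (n : ℕ) (hq : q ^ (n+1) = 0) (z : MvPowerSeries (Fin 2) R)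
    (hz : ∀ m : Fin 2 →₀ ℕ, m 0 = 0 ∨ m 1 = 0 → Dfun q n m z = 0) :
    z ∈ Ideal.span {MvPowerSeries.X (0 : Fin 2) * MvPowerSeries.X 1 - MvPowerSeries.C (σ := Fin 2) (R := R) q} := by
  classical
  set d : MvPowerSeries (Fin 2) R :=
    (fun m => ∑ k ∈ Finset.range (n+1), q ^ k * MvPowerSeries.coeff (R := R) (m + ddiag (k+1)) z) with hd
  have hdm : ∀ m' : Fin 2 →₀ ℕ, MvPowerSeries.coeff (R := R) m' d
      = ∑ k ∈ Finset.range (n+1), q ^ k * MvPowerSeries.coeff (R := R) (m' + ddiag (k+1)) z :=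
    fun m' => rfl
  have key : z = (MvPowerSeries.X 0 * MvPowerSeries.X 1 - MvPowerSeries.C (σ := Fin 2) (R := R) q) * d := by
    apply MvPowerSeries.ext
    intro m
    rw [sub_mul, map_sub, X0X1_eq, MvPowerSeries.coeff_monomial_mul, MvPowerSeries.coeff_C_mul]
    have hqd : q * (∑ k ∈ Finset.range (n+1), q ^ k * MvPowerSeries.coeff (R := R) (m + ddiag (k+1)) z)
        = ∑ k ∈ Finset.range n, q ^ (k+1) * MvPowerSeries.coeff (R := R) (m + ddiag (k+1)) z := by
      rw [Finset.mul_sum, Finset.sum_range_succ]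
      have : q * (q ^ n * MvPowerSeries.coeff (R := R) (m + ddiag (n+1)) z)
          = q ^ (n+1) * MvPowerSeries.coeff (R := R) (m + ddiag (n+1)) z := by ring
      rw [this, hq, zero_mul, add_zero]
      apply Finset.sum_congr rfl
      intro k _; ring
    by_cases h0 : m 0 = 0 ∨ m 1 = 0
    · rw [if_neg (ddiag_not_le m h0), hdm m, hqd]
      have hDz := hz m h0
      unfold Dfun at hDz
      rw [Finset.sum_range_succ'] at hDz
      simp only [ddiag_zero, add_zero, pow_zero, one_mul] at hDz
      linear_combination hDz
    · push_neg at h0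
      have hle := ddiag_le_of_ne m h0.1 h0.2
      rw [if_pos hle, hdm (m - ddiag 1), hdm m, hqd, one_mul]
      have : ∀ k, m - ddiag 1 + ddiag (k+1) = m + ddiag k := fun k => ddiag_sub_add m k hle
      simp only [this]
      rw [Finset.sum_range_succ']
      simp only [ddiag_zero, add_zero, pow_zero, one_mul]
      ring
  rw [key]
  exact Ideal.mem_span_singleton.mpr ⟨d, rfl⟩

/-- The tail of a power series in `t₂` after removing the first `N` coefficients. -/
noncomputable def gtail (g : MvPowerSeries (Fin 2) R) (N : ℕ) : MvPowerSeries (Fin 2) R :=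
  fun m => MvPowerSeries.coeff (R := R) (m + Finsupp.single 1 N) g

lemma trunc_decomp (g : MvPowerSeries (Fin 2) R)
    (hg : ∀ m : Fin 2 →₀ ℕ, m 0 ≠ 0 → MvPowerSeries.coeff (R := R) m g = 0) (N : ℕ) :
    g = (∑ j ∈ Finset.range N,
          MvPowerSeries.C (σ := Fin 2) (R := R) (MvPowerSeries.coeff (R := R) (Finsupp.single 1 j) g)
            * MvPowerSeries.X 1 ^ j)
      + MvPowerSeries.X 1 ^ N * gtail g N := by
  classical
  apply MvPowerSeries.ext
  intro m
  rw [map_add, map_sum]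
  have hterm : ∀ j, MvPowerSeries.coeff (R := R) m
      (MvPowerSeries.C (σ := Fin 2) (R := R) (MvPowerSeries.coeff (R := R) (Finsupp.single 1 j) g)
        * MvPowerSeries.X 1 ^ j)
      = if m = Finsupp.single 1 j then MvPowerSeries.coeff (R := R) (Finsupp.single 1 j) g else 0 := by
    intro j
    rw [MvPowerSeries.coeff_C_mul, MvPowerSeries.coeff_X_pow]
    split <;> simp
  simp only [hterm]
  have hXN : MvPowerSeries.coeff (R := R) m (MvPowerSeries.X 1 ^ N * gtail g N)
      = if Finsupp.single 1 N ≤ m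
        then MvPowerSeries.coeff (R := R) (m - Finsupp.single 1 N + Finsupp.single 1 N) g else 0 := by
    rw [MvPowerSeries.X_pow_eq, MvPowerSeries.coeff_monomial_mul]
    split <;> simp [gtail, MvPowerSeries.coeff_apply]
  rw [hXN]
  by_cases hge : N ≤ m 1
  · have hle : Finsupp.single 1 N ≤ m := Finsupp.single_le_iff.mpr hge
    rw [if_pos hle, tsub_add_cancel_of_le hle, Finset.sum_eq_zero, zero_add]
    intro j hj
    rw [if_neg]
    intro hc
    have hmj : m 1 = j := by rw [hc]; simp
    have := Finset.mem_range.mp hj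
    omega
  · rw [if_neg (fun hc => hge (Finsupp.single_le_iff.mp hc)), add_zero]
    by_cases hm0 : m 0 = 0
    · have hm : m = Finsupp.single 1 (m 1) := by
        ext a
        fin_cases a <;> simp [Finsupp.single_apply, hm0]
      rw [Finset.sum_eq_single_of_mem (m 1) (Finset.mem_range.mpr (by omega))]
      · rw [if_pos hm, ← hm]
      · intro j _ hj
        rw [if_neg]
        intro hc
        apply hj
        rw [hc]
        simp
    · rw [hg m hm0, Finset.sum_eq_zero]
      intro j _
      rw [if_neg]
      intro hc
      apply hm0
      rw [hc]
      simp [Finsupp.single_apply]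

end GlueAux

/- For `n ≥ 1` and `q^(n+1) = 0` (hence `q^(2n) = 0`): writing `a = a₁ + a₂` with
`a₁ = t₁·f(t₁) ∈ t₁R[[t₁]]` and `a₂ = g(t₂) ∈ R[[t₂]]`, and setting `u₁ = 1 + qⁿa₁`,
`u₂ = 1 + qⁿa₂`, for the automorphism `α = α_{u₁}` with `α(t₁) = t₁u₁`, `α(t₂) = t₂u₁⁻¹`
one has `u₁ · α(u₂) = 1 + qⁿ(a₁ + a₂)`; i.e. every unit `1 + qⁿa` factors this way. -/
theorem glue_unit_factorization (R : Type*) [CommRing R] (n : ℕ) (hn : 1 ≤ n) (q : R)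
    (hq : q ^ (n + 1) = 0)
    (f g : MvPowerSeries (Fin 2) R)
    (hf : ∀ m : Fin 2 →₀ ℕ, m 1 ≠ 0 → MvPowerSeries.coeff (R := R) m f = 0)
    (hg : ∀ m : Fin 2 →₀ ℕ, m 0 ≠ 0 → MvPowerSeries.coeff (R := R) m g = 0)
    (u₁ : (NodeAlg R q)ˣ)
    (hu₁ : (u₁ : NodeAlg R q) =
      1 + algebraMap R (NodeAlg R q) (q ^ n) *
        nodeMk R q (MvPowerSeries.X (0 : Fin 2) * f))
    (α : NodeAlg R q ≃ₐ[R] NodeAlg R q)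
    (hα₁ : α (nodeMk R q (MvPowerSeries.X (0 : Fin 2))) =
      nodeMk R q (MvPowerSeries.X (0 : Fin 2)) * u₁)
    (hα₂ : α (nodeMk R q (MvPowerSeries.X (1 : Fin 2))) =
      nodeMk R q (MvPowerSeries.X (1 : Fin 2)) * ↑u₁⁻¹) :
    (u₁ : NodeAlg R q) *
        α (1 + algebraMap R (NodeAlg R q) (q ^ n) * nodeMk R q g) =
      1 + algebraMap R (NodeAlg R q) (q ^ n) *
        (nodeMk R q (MvPowerSeries.X (0 : Fin 2) * f) + nodeMk R q g) := by
  classical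
  set A := NodeAlg R q with hA
  set mk := nodeMk R q with hmk
  set e : A := algebraMap R A (q ^ n) with he
  set a1 : A := mk (MvPowerSeries.X (0 : Fin 2) * f) with ha1
  set G : A := mk g with hG
  have hmkC : ∀ r : R, mk (MvPowerSeries.C (σ := Fin 2) (R := R) r) = algebraMap R A r := fun r => rfl
  -- q^n * q^n = 0 and q^n * q = 0
  have hq2 : q ^ n * q ^ n = 0 := by
    rw [← pow_add, show n + n = (n+1) + (n-1) by omega, pow_add, hq, zero_mul]
  have he2 : e * e = 0 := by rw [he, ← map_mul, hq2, map_zero]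
  have heq1 : e * algebraMap R A q = 0 := by
    rw [he, ← map_mul, ← pow_succ, hq, map_zero]
  -- the defining relation t₁ t₂ = q
  have hrel : mk (MvPowerSeries.X (0 : Fin 2)) * mk (MvPowerSeries.X (1 : Fin 2))
      = algebraMap R A q := by
    have hmem : (MvPowerSeries.X (0 : Fin 2) * MvPowerSeries.X 1
        - MvPowerSeries.C (σ := Fin 2) (R := R) q) ∈
        Ideal.span {MvPowerSeries.X (0 : Fin 2) * MvPowerSeries.X 1
          - MvPowerSeries.C (σ := Fin 2) (R := R) q} :=
      Ideal.subset_span rfl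
    have h0 : mk (MvPowerSeries.X (0 : Fin 2) * MvPowerSeries.X 1
        - MvPowerSeries.C (σ := Fin 2) (R := R) q) = 0 :=
      Ideal.Quotient.eq_zero_iff_mem.mpr hmem
    rw [map_sub, map_mul, sub_eq_zero] at h0
    rw [h0, hmkC]
  -- the inverse of u₁
  have hinv : (↑u₁⁻¹ : A) = 1 - e * a1 := by
    apply Units.inv_eq_of_mul_eq_one_right
    rw [hu₁]
    linear_combination (-(a1 * a1)) * he2
  -- α fixes t₂
  have hαt2 : α (mk (MvPowerSeries.X (1 : Fin 2))) = mk (MvPowerSeries.X (1 : Fin 2)) := by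
    rw [hα₂, hinv]
    have h1 : e * (mk (MvPowerSeries.X (1 : Fin 2)) * a1) = 0 := by
      rw [ha1, map_mul]
      calc e * (mk (MvPowerSeries.X (1 : Fin 2)) *
            (mk (MvPowerSeries.X (0 : Fin 2)) * mk f))
          = (e * (mk (MvPowerSeries.X (0 : Fin 2)) * mk (MvPowerSeries.X (1 : Fin 2)))) * mk f := by
            ring
        _ = 0 := by rw [hrel, heq1, zero_mul]
    linear_combination -h1
  -- the key step : e * α G = e * G
  have key : e * α G = e * G := by
    have hGdec : ∀ N : ℕ, G
        = mk (∑ j ∈ Finset.range N,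
            MvPowerSeries.C (σ := Fin 2) (R := R) (MvPowerSeries.coeff (R := R) (Finsupp.single 1 j) g)
              * MvPowerSeries.X 1 ^ j)
          + (mk (MvPowerSeries.X (1 : Fin 2)))^N * mk (gtail g N) := by
      intro N
      rw [hG]
      conv_lhs => rw [trunc_decomp g hg N]
      rw [map_add, map_mul, map_pow]
    have hpoly : ∀ N : ℕ, α (mk (∑ j ∈ Finset.range N,
        MvPowerSeries.C (σ := Fin 2) (R := R) (MvPowerSeries.coeff (R := R) (Finsupp.single 1 j) g)
          * MvPowerSeries.X 1 ^ j))
        = mk (∑ j ∈ Finset.range N,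
            MvPowerSeries.C (σ := Fin 2) (R := R) (MvPowerSeries.coeff (R := R) (Finsupp.single 1 j) g)
              * MvPowerSeries.X 1 ^ j) := by
      intro N
      rw [map_sum, map_sum]
      apply Finset.sum_congr rfl
      intro j _
      rw [map_mul, map_pow, map_mul, map_pow, hmkC, AlgEquiv.commutes, hαt2]
    have hxN : ∀ N : ℕ, ∃ c : MvPowerSeries (Fin 2) R,
        e * (α G - G) = mk (MvPowerSeries.C (σ := Fin 2) (R := R) (q^n) * (MvPowerSeries.X 1 ^ N * c)) := by
      intro N
      obtain ⟨c, hc⟩ := Ideal.Quotient.mk_surjective (α (mk (gtail g N)) - mk (gtail g N))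
      refine ⟨c, ?_⟩
      have hαG : α G = mk (∑ j ∈ Finset.range N,
            MvPowerSeries.C (σ := Fin 2) (R := R) (MvPowerSeries.coeff (R := R) (Finsupp.single 1 j) g)
              * MvPowerSeries.X 1 ^ j)
          + (mk (MvPowerSeries.X (1 : Fin 2)))^N * α (mk (gtail g N)) := by
        conv_lhs => rw [hGdec N]
        rw [map_add, map_mul, map_pow, hαt2, hpoly N]
      rw [map_mul mk, map_mul mk, map_pow mk, hmkC]
      have hmc : (mk c : A) = α (mk (gtail g N)) - mk (gtail g N) := hc
      rw [hmc, hαG]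
      conv_lhs => rw [hGdec N]
      ring
    obtain ⟨z, hz⟩ := Ideal.Quotient.mk_surjective (e * (α G - G))
    have hDz : ∀ m : Fin 2 →₀ ℕ, m 0 = 0 ∨ m 1 = 0 → Dfun q n m z = 0 := by
      intro m hm
      obtain ⟨c, hc⟩ := hxN (m 1 + 1)
      have hmem : z - MvPowerSeries.C (σ := Fin 2) (R := R) (q^n) * (MvPowerSeries.X 1 ^ (m 1 + 1) * c) ∈
          Ideal.span {MvPowerSeries.X (0 : Fin 2) * MvPowerSeries.X 1
            - MvPowerSeries.C (σ := Fin 2) (R := R) q} := by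
        apply Ideal.Quotient.eq_zero_iff_mem.mp
        have : (Ideal.Quotient.mk _ (z - MvPowerSeries.C (σ := Fin 2) (R := R) (q^n)
            * (MvPowerSeries.X 1 ^ (m 1 + 1) * c)) : A)
            = mk z - mk (MvPowerSeries.C (σ := Fin 2) (R := R) (q^n)
              * (MvPowerSeries.X 1 ^ (m 1 + 1) * c)) := map_sub _ _ _
        rw [this, hz, ← hc, sub_self]
      obtain ⟨d, hd⟩ := Ideal.mem_span_singleton.mp hmem
      have hzeq : z = MvPowerSeries.C (σ := Fin 2) (R := R) (q^n) * (MvPowerSeries.X 1 ^ (m 1 + 1) * c)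
          + (MvPowerSeries.X (0 : Fin 2) * MvPowerSeries.X 1
            - MvPowerSeries.C (σ := Fin 2) (R := R) q) * d := by
        rw [← hd]; ring
      rw [hzeq, Dfun_add, Dfun_trunc q n hq m (m 1 + 1) (by omega) c,
        Dfun_P0_mul q n hq m hm d, add_zero]
    have hzmem := Recon q n hq z hDz
    have hx0 : e * (α G - G) = 0 := by
      rw [← hz]
      exact Ideal.Quotient.eq_zero_iff_mem.mpr hzmem
    linear_combination hx0
  -- final assembly
  rw [map_add, map_one, map_mul, AlgEquiv.commutes, hu₁]
  linear_combination key + (a1 * α G) * he2
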